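/- arXiv:2006.08118 — 2 statements merged into one kernel-verified Lean document; each statement's English description precedes it below -/
import Mathlib

section
/- Let p and q be two distinct prime numbers, let ℤ_(p) and ℤ_(q) be the localizations of ℤ at p and q respectively, let R be the ring of matrices [[a, x],[0, b]] with a ∈ ℤ_(p), x ∈ ℚ, b ∈ ℤ_(q), let L be the right ideal of R consisting of matrices [[0, x],[0, y]] with x, y ∈ ℤ_(q), and let U = R/L as a right R-module. Then for every submodule X of U and every nonzero homomorphism f : U → U/X, either (i) there exists a homomorphism h : U → U such that π ∘ h = f, where π : U → U/X is the natural epimorphism, or (ii) there exist a submodule N of U and a surjective homomorphism h : N → U such that f ∘ h = π|_N. -/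
/-- The localization `ℤ_(p)` of `ℤ` at the prime `p`, realized as the subring of `ℚ`
consisting of the fractions `n / d` with `p ∤ d`. -/
def Zloc (p : ℕ) (hp : p.Prime) : Subring ℚ where
  carrier := {x : ℚ | ∃ n d : ℤ, ¬ (p : ℤ) ∣ d ∧ x * d = n}
  zero_mem' := ⟨0, 1, by simpa using (Nat.prime_iff_prime_int.mp hp).not_dvd_one, by norm_num⟩
  one_mem' := ⟨1, 1, by simpa using (Nat.prime_iff_prime_int.mp hp).not_dvd_one, by norm_num⟩
  add_mem' := by
    rintro x y ⟨n1, d1, hd1, h1⟩ ⟨n2, d2, hd2, h2⟩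
    refine ⟨n1 * d2 + n2 * d1, d1 * d2, ?_, ?_⟩
    · intro h
      rcases ((Nat.prime_iff_prime_int.mp hp).dvd_mul.mp h) with h | h
      exacts [hd1 h, hd2 h]
    · push_cast
      calc (x + y) * ((d1 : ℚ) * d2) = (x * d1) * d2 + (y * d2) * d1 := by ring
        _ = (n1 : ℚ) * d2 + (n2 : ℚ) * d1 := by rw [h1, h2]
  neg_mem' := by
    rintro x ⟨n, d, hd, h⟩
    exact ⟨-n, d, hd, by push_cast; linarith⟩
  mul_mem' := by
    rintro x y ⟨n1, d1, hd1, h1⟩ ⟨n2, d2, hd2, h2⟩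
    refine ⟨n1 * n2, d1 * d2, ?_, ?_⟩
    · intro h
      rcases ((Nat.prime_iff_prime_int.mp hp).dvd_mul.mp h) with h | h
      exacts [hd1 h, hd2 h]
    · push_cast
      calc (x * y) * ((d1 : ℚ) * d2) = (x * d1) * (y * d2) := by ring
        _ = (n1 : ℚ) * n2 := by rw [h1, h2]

/-- The triangular matrix ring `[[ℤ_(p), ℚ], [0, ℤ_(q)]]`, as a subring of the `2 × 2`
rational matrices. -/
def TriRing (p q : ℕ) (hp : p.Prime) (hq : q.Prime) :
    Subring (Matrix (Fin 2) (Fin 2) ℚ) where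
  carrier := {A | A 1 0 = 0 ∧ A 0 0 ∈ Zloc p hp ∧ A 1 1 ∈ Zloc q hq}
  zero_mem' := ⟨rfl, (Zloc p hp).zero_mem, (Zloc q hq).zero_mem⟩
  one_mem' := ⟨by simp [Matrix.one_apply], by simpa using (Zloc p hp).one_mem,
    by simpa using (Zloc q hq).one_mem⟩
  add_mem' := by
    rintro A B ⟨hA0, hA1, hA2⟩ ⟨hB0, hB1, hB2⟩
    exact ⟨by simp [hA0, hB0], (Zloc p hp).add_mem hA1 hB1, (Zloc q hq).add_mem hA2 hB2⟩
  neg_mem' := by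
    rintro A ⟨hA0, hA1, hA2⟩
    exact ⟨by simp [hA0], (Zloc p hp).neg_mem hA1, (Zloc q hq).neg_mem hA2⟩
  mul_mem' := by
    rintro A B ⟨hA0, hA1, hA2⟩ ⟨hB0, hB1, hB2⟩
    refine ⟨?_, ?_, ?_⟩
    · simp [Matrix.mul_apply, Fin.sum_univ_two, hA0, hB0]
    · have : (A * B) 0 0 = A 0 0 * B 0 0 + A 0 1 * B 1 0 := by
        simp [Matrix.mul_apply, Fin.sum_univ_two]
      rw [this, hB0, mul_zero, add_zero]
      exact (Zloc p hp).mul_mem hA1 hB1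
    · have : (A * B) 1 1 = A 1 0 * B 0 1 + A 1 1 * B 1 1 := by
        simp [Matrix.mul_apply, Fin.sum_univ_two]
      rw [this, hA0, zero_mul, zero_add]
      exact (Zloc q hq).mul_mem hA2 hB2

/-- The right ideal `L = [[0, ℤ_(q)], [0, ℤ_(q)]]` of `TriRing p q`, as a submodule of the
right module `TriRing p q` over itself. -/
def Lideal (p q : ℕ) (hp : p.Prime) (hq : q.Prime) :
    Submodule (TriRing p q hp hq)ᵐᵒᵖ (TriRing p q hp hq) where
  carrier := {A | (A : Matrix (Fin 2) (Fin 2) ℚ) 0 0 = 0 ∧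
    (A : Matrix (Fin 2) (Fin 2) ℚ) 0 1 ∈ Zloc q hq ∧
    (A : Matrix (Fin 2) (Fin 2) ℚ) 1 1 ∈ Zloc q hq}
  zero_mem' := ⟨rfl, (Zloc q hq).zero_mem, (Zloc q hq).zero_mem⟩
  add_mem' := by
    rintro A B ⟨hA0, hA1, hA2⟩ ⟨hB0, hB1, hB2⟩
    exact ⟨by simp [hA0, hB0], by simpa using (Zloc q hq).add_mem hA1 hB1,
      by simpa using (Zloc q hq).add_mem hA2 hB2⟩
  smul_mem' := by
    rintro r A ⟨hA0, hA1, hA2⟩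
    have hr := r.unop.2
    have hsmul : ((r • A : TriRing p q hp hq) : Matrix (Fin 2) (Fin 2) ℚ) =
        (A : Matrix (Fin 2) (Fin 2) ℚ) * (r.unop : Matrix (Fin 2) (Fin 2) ℚ) := rfl
    refine ⟨?_, ?_, ?_⟩
    · rw [hsmul]
      have : ((A : Matrix (Fin 2) (Fin 2) ℚ) * (r.unop : Matrix (Fin 2) (Fin 2) ℚ)) 0 0 =
          (A : Matrix (Fin 2) (Fin 2) ℚ) 0 0 * (r.unop : Matrix (Fin 2) (Fin 2) ℚ) 0 0 +
          (A : Matrix (Fin 2) (Fin 2) ℚ) 0 1 * (r.unop : Matrix (Fin 2) (Fin 2) ℚ) 1 0 := by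
        simp [Matrix.mul_apply, Fin.sum_univ_two]
      rw [this, hA0, hr.1, zero_mul, mul_zero, add_zero]
    · rw [hsmul]
      have : ((A : Matrix (Fin 2) (Fin 2) ℚ) * (r.unop : Matrix (Fin 2) (Fin 2) ℚ)) 0 1 =
          (A : Matrix (Fin 2) (Fin 2) ℚ) 0 0 * (r.unop : Matrix (Fin 2) (Fin 2) ℚ) 0 1 +
          (A : Matrix (Fin 2) (Fin 2) ℚ) 0 1 * (r.unop : Matrix (Fin 2) (Fin 2) ℚ) 1 1 := by
        simp [Matrix.mul_apply, Fin.sum_univ_two]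
      rw [this, hA0, zero_mul, zero_add]
      exact (Zloc q hq).mul_mem hA1 hr.2.2
    · rw [hsmul]
      have : ((A : Matrix (Fin 2) (Fin 2) ℚ) * (r.unop : Matrix (Fin 2) (Fin 2) ℚ)) 1 1 =
          (A : Matrix (Fin 2) (Fin 2) ℚ) 1 0 * (r.unop : Matrix (Fin 2) (Fin 2) ℚ) 0 1 +
          (A : Matrix (Fin 2) (Fin 2) ℚ) 1 1 * (r.unop : Matrix (Fin 2) (Fin 2) ℚ) 1 1 := by
        simp [Matrix.mul_apply, Fin.sum_univ_two]
      rw [this, A.2.1, zero_mul, zero_add]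
      exact (Zloc q hq).mul_mem hA2 hr.2.2

/-- The uniserial module `U = R/L`. -/
abbrev Umod (p q : ℕ) (hp : p.Prime) (hq : q.Prime) :=
  TriRing p q hp hq ⧸ Lideal p q hp hq

section StmtHelpers

lemma zloc_of_den {q : ℕ} (hq : q.Prime) {x : ℚ} (h : ¬ (q:ℤ) ∣ (x.den : ℤ)) :
    x ∈ Zloc q hq :=
  ⟨x.num, x.den, h, by exact_mod_cast Rat.mul_den_eq_num x⟩

lemma zloc_inv {q : ℕ} (hq : q.Prime) {a : ℚ} (h : a ∉ Zloc q hq) :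
    a ≠ 0 ∧ a⁻¹ ∈ Zloc q hq := by
  have ha0 : a ≠ 0 := by rintro rfl; exact h (Zloc q hq).zero_mem
  have hden : (q:ℤ) ∣ (a.den : ℤ) := by
    by_contra hd; exact h (zloc_of_den hq hd)
  have hnum : ¬ (q:ℤ) ∣ a.num := by
    intro hn
    have h1 : q ∣ a.num.natAbs := Int.natCast_dvd.mp hn
    have h2 : q ∣ a.den := Int.natCast_dvd_natCast.mp hden
    have := Nat.Coprime.eq_one_of_dvd (Nat.Coprime.coprime_dvd_left h1 a.reduced) h2
    exact hq.one_lt.ne' this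
  refine ⟨ha0, a.den, a.num, hnum, ?_⟩
  have h3 : a * a.den = a.num := by exact_mod_cast Rat.mul_den_eq_num a
  field_simp
  exact_mod_cast h3.symm

/-- Constructor for elements of `TriRing`. -/
def tri (p q : ℕ) (hp : p.Prime) (hq : q.Prime) (a x b : ℚ) (ha : a ∈ Zloc p hp)
    (hb : b ∈ Zloc q hq) : TriRing p q hp hq :=
  ⟨!![a, x; 0, b], by refine ⟨by simp, ?_, ?_⟩ <;> simpa⟩

lemma tri_val (p q : ℕ) (hp : p.Prime) (hq : q.Prime) (a x b : ℚ) (ha : a ∈ Zloc p hp)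
    (hb : b ∈ Zloc q hq) :
    ((tri p q hp hq a x b ha hb : TriRing p q hp hq) : Matrix (Fin 2) (Fin 2) ℚ) =
      !![a, x; 0, b] := rfl

lemma tri_coe_mul (p q : ℕ) (hp : p.Prime) (hq : q.Prime) (r s : TriRing p q hp hq) :
    ((r * s : TriRing p q hp hq) : Matrix (Fin 2) (Fin 2) ℚ) =
      (r : Matrix (Fin 2) (Fin 2) ℚ) * (s : Matrix (Fin 2) (Fin 2) ℚ) := rfl

end StmtHelpers

set_option maxHeartbeats 2000000 in
/-- For distinct primes `p`, `q`, let `U = R/L` where `R = [[ℤ_(p), ℚ], [0, ℤ_(q)]]` and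
`L = [[0, ℤ_(q)], [0, ℤ_(q)]]`. For every submodule `X` of `U` and every nonzero
homomorphism `f : U → U/X`, either (i) there is `h : U → U` with `π ∘ h = f`, where
`π : U → U/X` is the natural epimorphism, or (ii) there are a submodule `N` of `U` and a
surjective homomorphism `h : N → U` with `f ∘ h = π|_N`. -/
theorem stmt_16 (p q : ℕ) (hp : p.Prime) (hq : q.Prime) (hpq : p ≠ q)
    (X : Submodule (TriRing p q hp hq)ᵐᵒᵖ (Umod p q hp hq))
    (f : Umod p q hp hq →ₗ[(TriRing p q hp hq)ᵐᵒᵖ] (Umod p q hp hq ⧸ X)) (hf : f ≠ 0) :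
    (∃ h : Umod p q hp hq →ₗ[(TriRing p q hp hq)ᵐᵒᵖ] Umod p q hp hq,
      X.mkQ ∘ₗ h = f) ∨
    (∃ (N : Submodule (TriRing p q hp hq)ᵐᵒᵖ (Umod p q hp hq))
        (h : ↥N →ₗ[(TriRing p q hp hq)ᵐᵒᵖ] Umod p q hp hq),
      Function.Surjective h ∧ f ∘ₗ h = X.mkQ ∘ₗ N.subtype) := by
  classical
  set M := Matrix (Fin 2) (Fin 2) ℚ with hM
  set Rng := TriRing p q hp hq with hRng
  set L := Lideal p q hp hq with hL
  obtain ⟨v, hv⟩ := Submodule.Quotient.mk_surjective X (f (L.mkQ 1))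
  obtain ⟨vm, hvm⟩ := Submodule.Quotient.mk_surjective L v
  have hvm10 : (vm : M) 1 0 = 0 := vm.2.1
  have ha : (vm : M) 0 0 ∈ Zloc p hp := vm.2.2.1
  have hb : (vm : M) 1 1 ∈ Zloc q hq := vm.2.2.2
  set a : ℚ := (vm : M) 0 0 with ha_def
  set xx : ℚ := (vm : M) 0 1 with hxx_def
  set b : ℚ := (vm : M) 1 1 with hb_def
  have hsmul : ∀ (c : Rngᵐᵒᵖ) (r : Rng), c • r = r * c.unop := fun c r => rfl
  have key : ∀ r : Rng, f (L.mkQ r) = X.mkQ (L.mkQ (vm * r)) := by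
    intro r
    have h1 : L.mkQ r = (MulOpposite.op r) • (L.mkQ (1 : Rng)) := by
      rw [← map_smul, hsmul, MulOpposite.unop_op, one_mul]
    have h2 : f (L.mkQ 1) = X.mkQ v := hv.symm
    have h3 : v = L.mkQ vm := hvm.symm
    rw [h1, map_smul, h2, h3, ← map_smul, ← map_smul, hsmul, MulOpposite.unop_op]
  have keyL : ∀ s : Rng, s ∈ L → L.mkQ (vm * s) ∈ X := by
    intro s hs
    have h0 : L.mkQ s = 0 := by
      rw [Submodule.mkQ_apply]; exact (Submodule.Quotient.mk_eq_zero L).mpr hs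
    have h1 := key s
    rw [h0, map_zero] at h1
    refine (Submodule.Quotient.mk_eq_zero X).mp ?_
    rw [← Submodule.mkQ_apply]; exact h1.symm
  by_cases haq : a ∈ Zloc q hq
  · -- Case (i): lift `f` through left multiplication by `diag(a, a)`.
    left
    set A : Rng := tri p q hp hq a 0 a ha haq with hA_def
    have hA : (A : M) = !![a, 0; 0, a] := rfl
    set mulA : Rng →ₗ[Rngᵐᵒᵖ] Rng :=
      { toFun := fun r => A * r
        map_add' := fun r s => mul_add A r s
        map_smul' := fun c r => by
          simp only [RingHom.id_apply, hsmul, mul_assoc] } with hmulA_def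
    have hmulA : ∀ r : Rng, mulA r = A * r := fun r => rfl
    have hsub : L ≤ LinearMap.ker (L.mkQ ∘ₗ mulA) := by
      intro s hs
      obtain ⟨hs0, hs1, hs2⟩ := hs
      simp only [LinearMap.mem_ker, LinearMap.comp_apply, hmulA, Submodule.mkQ_apply]
      refine (Submodule.Quotient.mk_eq_zero L).mpr ?_
      have e00 : ((A * s : Rng) : M) 0 0 = a * (s : M) 0 0 := by
        rw [tri_coe_mul, Matrix.mul_apply, Fin.sum_univ_two, hA]
        simp [s.2.1]
      have e01 : ((A * s : Rng) : M) 0 1 = a * (s : M) 0 1 := by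
        rw [tri_coe_mul, Matrix.mul_apply, Fin.sum_univ_two, hA]
        simp
      have e11 : ((A * s : Rng) : M) 1 1 = a * (s : M) 1 1 := by
        rw [tri_coe_mul, Matrix.mul_apply, Fin.sum_univ_two, hA]
        simp
      exact ⟨by rw [e00, hs0, mul_zero], by rw [e01]; exact mul_mem haq hs1,
        by rw [e11]; exact mul_mem haq hs2⟩
    refine ⟨L.liftQ (L.mkQ ∘ₗ mulA) hsub, ?_⟩
    apply Submodule.linearMap_qext
    apply LinearMap.ext
    intro r
    simp only [LinearMap.comp_apply, Submodule.mkQ_apply, Submodule.liftQ_apply, hmulA]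
    have hkey' : f (Submodule.Quotient.mk r) = X.mkQ (L.mkQ (vm * r)) := key r
    rw [hkey']
    simp only [Submodule.mkQ_apply]
    refine (Submodule.Quotient.eq X).mpr ?_
    set s : Rng := tri p q hp hq 0 0 ((r : M) 1 1) (Zloc p hp).zero_mem r.2.2.2 with hs_def
    have hsL : s ∈ L := by
      refine ⟨?_, ?_, ?_⟩
      · show (!![(0:ℚ), 0; 0, (r : M) 1 1]) 0 0 = 0
        simp
      · show (!![(0:ℚ), 0; 0, (r : M) 1 1]) 0 1 ∈ Zloc q hq
        simpa using (Zloc q hq).zero_mem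
      · show (!![(0:ℚ), 0; 0, (r : M) 1 1]) 1 1 ∈ Zloc q hq
        simpa using r.2.2.2
    have hX : (Submodule.Quotient.mk (vm * s) : Umod p q hp hq) ∈ X := by
      have := keyL s hsL; rwa [Submodule.mkQ_apply] at this
    have hdiff : (A * r : Rng) - vm * r - (-(vm * s)) ∈ L := by
      have hsval : (s : M) = !![(0:ℚ), 0; 0, (r : M) 1 1] := rfl
      have hval : (((A * r : Rng) - vm * r - (-(vm * s)) : Rng) : M) =
          (A : M) * (r : M) - (vm : M) * (r : M) + (vm : M) * (s : M) := by
        push_cast [tri_coe_mul]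
        rw [sub_neg_eq_add]
      refine ⟨?_, ?_, ?_⟩
      · rw [hval]
        simp only [Matrix.sub_apply, Matrix.add_apply, Matrix.mul_apply, Fin.sum_univ_two,
          hA, hsval, r.2.1, hvm10]
        simp
        exact sub_eq_zero.mpr rfl
      · rw [hval]
        have : ((A : M) * (r : M) - (vm : M) * (r : M) + (vm : M) * (s : M)) 0 1 = 0 := by
          simp only [Matrix.sub_apply, Matrix.add_apply, Matrix.mul_apply, Fin.sum_univ_two,
            hA, hsval, r.2.1, hvm10]
          simp
          rw [ha_def]; ring
        rw [this]; exact (Zloc q hq).zero_mem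
      · rw [hval]
        have : ((A : M) * (r : M) - (vm : M) * (r : M) + (vm : M) * (s : M)) 1 1 =
            a * (r : M) 1 1 := by
          simp only [Matrix.sub_apply, Matrix.add_apply, Matrix.mul_apply, Fin.sum_univ_two,
            hA, hsval, r.2.1, hvm10]
          simp
        rw [this]; exact mul_mem haq r.2.2.2
    have hmk : (Submodule.Quotient.mk ((A * r : Rng) - vm * r) : Umod p q hp hq) =
        Submodule.Quotient.mk (-(vm * s)) := (Submodule.Quotient.eq L).mpr hdiff
    rw [← Submodule.Quotient.mk_sub, hmk, Submodule.Quotient.mk_neg]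
    exact X.neg_mem hX
  · -- Case (ii): `f` is "multiplication by `a`" with `a⁻¹ ∈ Zloc q`.
    right
    obtain ⟨ha0, hainv⟩ := zloc_inv hq haq
    set P : Submodule Rngᵐᵒᵖ Rng :=
      { carrier := {r : Rng | ∃ z ∈ Zloc p hp, (r : M) 0 0 = a * z}
        zero_mem' := ⟨0, (Zloc p hp).zero_mem, by simp⟩
        add_mem' := by
          rintro r s ⟨z1, hz1, h1⟩ ⟨z2, hz2, h2⟩
          exact ⟨z1 + z2, add_mem hz1 hz2, by
            show (r : M) 0 0 + (s : M) 0 0 = a * (z1 + z2)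
            rw [h1, h2]; ring⟩
        smul_mem' := by
          rintro c r ⟨z, hz, hzr⟩
          refine ⟨z * (c.unop : M) 0 0, mul_mem hz c.unop.2.2.1, ?_⟩
          show ((r * c.unop : Rng) : M) 0 0 = a * (z * (c.unop : M) 0 0)
          rw [tri_coe_mul, Matrix.mul_apply, Fin.sum_univ_two, c.unop.2.1, hzr]
          ring } with hP_def
    set φ : P →ₗ[Rngᵐᵒᵖ] Umod p q hp hq := L.mkQ ∘ₗ P.subtype with hφ_def
    have hDmem : ∀ r : P, !![((r : Rng) : M) 0 0 * a⁻¹, ((r : Rng) : M) 0 1 * a⁻¹; 0, 0] ∈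
        TriRing p q hp hq := by
      intro r
      refine ⟨by simp, ?_, by simpa using (Zloc q hq).zero_mem⟩
      obtain ⟨z, hz, hzr⟩ := r.2
      have : (!![((r : Rng) : M) 0 0 * a⁻¹, ((r : Rng) : M) 0 1 * a⁻¹; 0, 0]) 0 0 = z := by
        simp [hzr]
        field_simp
      rw [this]; exact hz
    set D : P → Rng := fun r =>
      ⟨!![((r : Rng) : M) 0 0 * a⁻¹, ((r : Rng) : M) 0 1 * a⁻¹; 0, 0], hDmem r⟩ with hD_def
    set ψ : P →ₗ[Rngᵐᵒᵖ] Umod p q hp hq :=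
      { toFun := fun r => L.mkQ (D r)
        map_add' := by
          intro r s
          show L.mkQ (D (r + s)) = L.mkQ (D r) + L.mkQ (D s)
          rw [← map_add]
          congr 1
          apply Subtype.ext
          show (!![(((r + s : P) : Rng) : M) 0 0 * a⁻¹, (((r + s : P) : Rng) : M) 0 1 * a⁻¹;
            0, 0] : M) = _
          have h1 : (((r + s : P) : Rng) : M) = ((r : Rng) : M) + ((s : Rng) : M) := rfl
          push_cast [h1]
          ext i j
          fin_cases i <;> fin_cases j <;>
            simp [Matrix.add_apply, hD_def] <;> ring
        map_smul' := by
          intro c r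
          show L.mkQ (D (c • r)) = c • L.mkQ (D r)
          rw [← map_smul]
          congr 1
          apply Subtype.ext
          have h1 : (((c • r : P) : Rng) : M) = ((r : Rng) : M) * ((c.unop : Rng) : M) := rfl
          have h2 : ((c • D r : Rng) : M) = ((D r : Rng) : M) * ((c.unop : Rng) : M) := rfl
          show (!![(((c • r : P) : Rng) : M) 0 0 * a⁻¹, (((c • r : P) : Rng) : M) 0 1 * a⁻¹;
            0, 0] : M) = ((c • D r : Rng) : M)
          rw [h1, h2]
          have hc10 : ((c.unop : Rng) : M) 1 0 = 0 := c.unop.2.1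
          ext i j
          fin_cases i <;> fin_cases j <;>
            simp [Matrix.mul_apply, Fin.sum_univ_two, hc10, hD_def] <;> ring } with hψ_def
    have hψapp : ∀ r : P, ψ r = L.mkQ (D r) := fun r => rfl
    have hker : LinearMap.ker φ ≤ LinearMap.ker ψ := by
      rintro ⟨r, hrP⟩ hk
      have hrL : r ∈ L := by
        have : L.mkQ r = 0 := hk
        rw [Submodule.mkQ_apply] at this
        exact (Submodule.Quotient.mk_eq_zero L).mp this
      show ψ ⟨r, hrP⟩ = 0
      rw [hψapp, Submodule.mkQ_apply]
      refine (Submodule.Quotient.mk_eq_zero L).mpr ?_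
      refine ⟨?_, ?_, ?_⟩
      · show (!![(r : M) 0 0 * a⁻¹, (r : M) 0 1 * a⁻¹; 0, 0] : M) 0 0 = 0
        simp [hrL.1]
      · show (!![(r : M) 0 0 * a⁻¹, (r : M) 0 1 * a⁻¹; 0, 0] : M) 0 1 ∈ Zloc q hq
        simpa using mul_mem hrL.2.1 hainv
      · show (!![(r : M) 0 0 * a⁻¹, (r : M) 0 1 * a⁻¹; 0, 0] : M) 1 1 ∈ Zloc q hq
        simpa using (Zloc q hq).zero_mem
    set ψ' := (LinearMap.ker φ).liftQ ψ hker with hψ'_def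
    have hψsurj : Function.Surjective ψ := by
      intro w
      obtain ⟨t, ht⟩ := Submodule.Quotient.mk_surjective L w
      have htmem : !![a * (t : M) 0 0, a * (t : M) 0 1; 0, 0] ∈ TriRing p q hp hq := by
        refine ⟨by simp, ?_, by simpa using (Zloc q hq).zero_mem⟩
        simpa using mul_mem ha t.2.2.1
      have hrP : (⟨_, htmem⟩ : Rng) ∈ P := ⟨(t : M) 0 0, t.2.2.1, by simp⟩
      refine ⟨⟨⟨_, htmem⟩, hrP⟩, ?_⟩
      rw [hψapp, Submodule.mkQ_apply, ← ht]
      refine (Submodule.Quotient.eq L).mpr ?_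
      refine ⟨?_, ?_, ?_⟩
      · show ((D ⟨⟨_, htmem⟩, hrP⟩ : Rng) : M) 0 0 - (t : M) 0 0 = 0
        show (!![a * (t : M) 0 0 * a⁻¹, a * (t : M) 0 1 * a⁻¹; 0, 0] : M) 0 0 - (t : M) 0 0 = 0
        simp
        field_simp
        ring
      · show ((D ⟨⟨_, htmem⟩, hrP⟩ : Rng) : M) 0 1 - (t : M) 0 1 ∈ Zloc q hq
        show (!![a * (t : M) 0 0 * a⁻¹, a * (t : M) 0 1 * a⁻¹; 0, 0] : M) 0 1 - (t : M) 0 1 ∈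
          Zloc q hq
        have : (!![a * (t : M) 0 0 * a⁻¹, a * (t : M) 0 1 * a⁻¹; 0, 0] : M) 0 1 -
            (t : M) 0 1 = 0 := by
          simp
          field_simp
          ring
        rw [this]; exact (Zloc q hq).zero_mem
      · show ((D ⟨⟨_, htmem⟩, hrP⟩ : Rng) : M) 1 1 - (t : M) 1 1 ∈ Zloc q hq
        show (!![a * (t : M) 0 0 * a⁻¹, a * (t : M) 0 1 * a⁻¹; 0, 0] : M) 1 1 - (t : M) 1 1 ∈
          Zloc q hq
        simpa using (Zloc q hq).neg_mem t.2.2.2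
    refine ⟨LinearMap.range φ, ψ' ∘ₗ (φ.quotKerEquivRange).symm.toLinearMap, ?_, ?_⟩
    · have hψ'surj : Function.Surjective ψ' := by
        intro w
        obtain ⟨r, hr⟩ := hψsurj w
        exact ⟨Submodule.Quotient.mk r, by rw [hψ'_def, Submodule.liftQ_apply, hr]⟩
      exact hψ'surj.comp (φ.quotKerEquivRange).symm.surjective
    · apply LinearMap.ext
      rintro ⟨w, hw⟩
      obtain ⟨r, rfl⟩ := hw
      have h1 : (φ.quotKerEquivRange).symm ⟨φ r, LinearMap.mem_range_self φ r⟩ =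
          (LinearMap.ker φ).mkQ r := LinearMap.quotKerEquivRange_symm_apply_image φ r _
      have h2 : (⟨φ r, LinearMap.mem_range_self φ r⟩ : LinearMap.range φ) =
          ⟨φ r, ⟨r, rfl⟩⟩ := rfl
      simp only [LinearMap.comp_apply, LinearEquiv.coe_toLinearMap, Submodule.coe_subtype]
      rw [← h2, h1, Submodule.mkQ_apply, hψ'_def, Submodule.liftQ_apply, hψapp]
      have h3 : φ r = L.mkQ (r : Rng) := rfl
      rw [h3, key (D r)]
      congr 1
      rw [Submodule.mkQ_apply, Submodule.mkQ_apply]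
      refine (Submodule.Quotient.eq L).mpr ?_
      have hrv10 : ((r : Rng) : M) 1 0 = 0 := (r : Rng).2.1
      have e00 : ((vm * D r : Rng) : M) 0 0 = ((r : Rng) : M) 0 0 := by
        rw [tri_coe_mul, Matrix.mul_apply, Fin.sum_univ_two]
        show a * (((r : Rng) : M) 0 0 * a⁻¹) + xx * 0 = ((r : Rng) : M) 0 0
        field_simp
        ring
      have e01 : ((vm * D r : Rng) : M) 0 1 = ((r : Rng) : M) 0 1 := by
        rw [tri_coe_mul, Matrix.mul_apply, Fin.sum_univ_two]
        show a * (((r : Rng) : M) 0 1 * a⁻¹) + xx * 0 = ((r : Rng) : M) 0 1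
        field_simp
        ring
      have e11 : ((vm * D r : Rng) : M) 1 1 = 0 := by
        rw [tri_coe_mul, Matrix.mul_apply, Fin.sum_univ_two, hvm10]
        show 0 * (((r : Rng) : M) 0 1 * a⁻¹) + b * 0 = 0
        ring
      refine ⟨?_, ?_, ?_⟩
      · show ((vm * D r : Rng) : M) 0 0 - ((r : Rng) : M) 0 0 = 0
        rw [e00, sub_self]
      · show ((vm * D r : Rng) : M) 0 1 - ((r : Rng) : M) 0 1 ∈ Zloc q hq
        rw [e01, sub_self]; exact (Zloc q hq).zero_mem
      · show ((vm * D r : Rng) : M) 1 1 - ((r : Rng) : M) 1 1 ∈ Zloc q hq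
        rw [e11, zero_sub]
        exact (Zloc q hq).neg_mem (r : Rng).2.2.2
end

section
/- Let p and q be two distinct prime numbers, let ℤ_(p) and ℤ_(q) be the localizations of ℤ at p and q respectively, let R be the ring of matrices [[a, x],[0, b]] with a ∈ ℤ_(p), x ∈ ℚ, b ∈ ℤ_(q), let L be the right ideal of R consisting of matrices [[0, x],[0, y]] with x, y ∈ ℤ_(q), and let U = R/L as a right R-module. Then the right R-module U² is lifting. -/
/-- A submodule `N` of `M` is *small* (superfluous) in `M` if `N + X ≠ M`
for every proper submodule `X` of `M`. -/
def IsSmallSubmodule {R M : Type*} [Ring R] [AddCommGroup M] [Module R M]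
    (N : Submodule R M) : Prop :=
  ∀ X : Submodule R M, X ≠ ⊤ → N ⊔ X ≠ ⊤

/-- `X` is a direct summand of `M`. -/
def IsDirectSummand {R M : Type*} [Ring R] [AddCommGroup M] [Module R M]
    (X : Submodule R M) : Prop :=
  ∃ Y : Submodule R M, IsCompl X Y

/-- A module `M` is *lifting* if for every submodule `N` of `M` there is a direct summand
`X` of `M` with `X ⊆ N` such that `N/X` is small in `M/X`. -/
def IsLiftingModule (R M : Type*) [Ring R] [AddCommGroup M] [Module R M] : Prop :=
  ∀ N : Submodule R M, ∃ X : Submodule R M,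
    X ≤ N ∧ IsDirectSummand X ∧ IsSmallSubmodule (N.map X.mkQ)

/-- An internal finite direct sum decomposition `M = ⨁ᵢ Fᵢ`. -/
def IsInternalDirectSum {R M ι : Type*} [Ring R] [AddCommGroup M] [Module R M]
    (F : ι → Submodule R M) : Prop :=
  (⨆ i, F i) = ⊤ ∧ ∀ i, Disjoint (F i) (⨆ j ∈ ({i}ᶜ : Set ι), F j)

/-- A module `M` satisfies the *finite internal exchange property* if for any direct
summand `X` of `M` and any finite direct sum decomposition `M = M₁ ⊕ ⋯ ⊕ Mₙ` there are
submodules `Mᵢ' ⊆ Mᵢ` with `M = X ⊕ M₁' ⊕ ⋯ ⊕ Mₙ'`. -/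
def SatisfiesFIEP (R M : Type*) [Ring R] [AddCommGroup M] [Module R M] : Prop :=
  ∀ (X : Submodule R M), IsDirectSummand X →
    ∀ (n : ℕ) (Mi : Fin n → Submodule R M), IsInternalDirectSum Mi →
      ∃ Mi' : Fin n → Submodule R M, (∀ i, Mi' i ≤ Mi i) ∧
        IsInternalDirectSum (fun o : Option (Fin n) => o.elim X Mi')

section RatLemmas

variable {l m : ℕ}

lemma zloc_mem (hl : l.Prime) {y : ℚ} :
    y ∈ Zloc l hl ↔ ∃ n d : ℤ, ¬ (l : ℤ) ∣ d ∧ y * d = n := Iff.rfl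

lemma zloc_intCast (hl : l.Prime) (n : ℤ) : (n : ℚ) ∈ Zloc l hl :=
  ⟨n, 1, by simpa using (Nat.prime_iff_prime_int.mp hl).not_dvd_one, by norm_num⟩

lemma zloc_natCast (hl : l.Prime) (n : ℕ) : (n : ℚ) ∈ Zloc l hl := by
  exact_mod_cast zloc_intCast hl (n : ℤ)

lemma zloc_iff_den (hl : l.Prime) {y : ℚ} :
    y ∈ Zloc l hl ↔ ¬ (l:ℤ) ∣ (y.den : ℤ) := by
  rw [zloc_mem hl]
  constructor
  · rintro ⟨n, d, hd, h⟩
    have hd0 : d ≠ 0 := by rintro rfl; exact hd (dvd_zero _)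
    have hy : y = (n : ℚ) / (d : ℚ) := by
      field_simp at h ⊢
      linear_combination h
    intro hdvd
    have h2 : ((Rat.divInt n d).den : ℤ) ∣ d := Rat.den_dvd n d
    rw [Rat.divInt_eq_div, ← hy] at h2
    exact hd (hdvd.trans h2)
  · intro h
    exact ⟨y.num, (y.den : ℤ), h, by exact_mod_cast Rat.mul_den_eq_num y⟩

/-- The set `l · ℤ_(l)` of non-units of `ℤ_(l)`. -/
def Pm (l : ℕ) (hl : l.Prime) : Set ℚ := {y : ℚ | ∃ z ∈ Zloc l hl, y = l * z}

lemma Pm_zero (hl : l.Prime) : (0:ℚ) ∈ Pm l hl := ⟨0, (Zloc l hl).zero_mem, by norm_num⟩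

lemma Pm_subset (hl : l.Prime) {y : ℚ} (h : y ∈ Pm l hl) : y ∈ Zloc l hl := by
  obtain ⟨z, hz, rfl⟩ := h
  exact (Zloc l hl).mul_mem (zloc_natCast hl l) hz

lemma Pm_add (hl : l.Prime) {y y' : ℚ} (h : y ∈ Pm l hl) (h' : y' ∈ Pm l hl) :
    y + y' ∈ Pm l hl := by
  obtain ⟨z, hz, rfl⟩ := h; obtain ⟨z', hz', rfl⟩ := h'
  exact ⟨z + z', (Zloc l hl).add_mem hz hz', by ring⟩

lemma Pm_neg (hl : l.Prime) {y : ℚ} (h : y ∈ Pm l hl) : -y ∈ Pm l hl := by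
  obtain ⟨z, hz, rfl⟩ := h
  exact ⟨-z, (Zloc l hl).neg_mem hz, by ring⟩

lemma Pm_mul (hl : l.Prime) {y z : ℚ} (h : y ∈ Pm l hl) (hz : z ∈ Zloc l hl) :
    y * z ∈ Pm l hl := by
  obtain ⟨w, hw, rfl⟩ := h
  exact ⟨w * z, (Zloc l hl).mul_mem hw hz, by ring⟩

lemma one_not_Pm (hl : l.Prime) : (1:ℚ) ∉ Pm l hl := by
  rintro ⟨z, ⟨n, d, hd, hzd⟩, hz1⟩
  apply hd
  have hdn : (d:ℚ) = (l:ℚ) * n := by linear_combination (d:ℚ) * hz1 + (l:ℚ) * hzd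
  exact ⟨n, by exact_mod_cast hdn⟩

lemma dvd_num_Pm (hl : l.Prime) {y : ℚ} (h : (l:ℤ) ∣ y.num) : y ∈ Pm l hl := by
  obtain ⟨k, hk⟩ := h
  have hden : ¬ (l:ℤ) ∣ (y.den:ℤ) := by
    intro hd
    rcases eq_or_ne y 0 with h0 | h0
    · have hden1 : ((y.den : ℤ)) = 1 := by rw [h0]; rfl
      rw [hden1] at hd
      exact (Nat.prime_iff_prime_int.mp hl).not_dvd_one hd
    · have h1 : (l:ℤ) ∣ (y.num.natAbs : ℤ) := (Int.dvd_natAbs).mpr ⟨k, hk⟩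
      have h1' : l ∣ y.num.natAbs := by exact_mod_cast h1
      have h2' : l ∣ y.den := by exact_mod_cast hd
      have h3 := Nat.dvd_gcd h1' h2'
      rw [y.reduced] at h3
      exact hl.one_lt.ne' (Nat.dvd_one.mp h3)
  refine ⟨(k : ℚ) / (y.den : ℚ), ?_, ?_⟩
  · refine ⟨k, (y.den : ℤ), hden, ?_⟩
    have hd0 : (y.den : ℚ) ≠ 0 := by exact_mod_cast y.den_nz
    field_simp
    norm_cast
  · have hd0 : (y.den : ℚ) ≠ 0 := by exact_mod_cast y.den_nz
    have hnum : y * y.den = y.num := by exact_mod_cast Rat.mul_den_eq_num y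
    have hkQ : (y.num : ℚ) = (l:ℚ) * (k:ℚ) := by exact_mod_cast hk
    field_simp
    linear_combination hkQ + hnum

lemma not_Pm_num (hl : l.Prime) {y : ℚ} (h : y ∉ Pm l hl) : ¬ (l:ℤ) ∣ y.num :=
  fun hd => h (dvd_num_Pm hl hd)

lemma inv_mem_zloc (hl : l.Prime) {y : ℚ} (hnum : ¬ (l:ℤ) ∣ y.num) (h0 : y ≠ 0) :
    y⁻¹ ∈ Zloc l hl := by
  refine ⟨(y.den : ℤ), y.num, hnum, ?_⟩
  have hnumeq : y * y.den = y.num := by exact_mod_cast Rat.mul_den_eq_num y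
  have hn0 : (y.num : ℚ) ≠ 0 := by
    exact_mod_cast Rat.num_ne_zero.mpr h0
  field_simp
  exact_mod_cast hnumeq.symm

lemma zloc_unit (hl : l.Prime) {y : ℚ} (hy : y ∈ Zloc l hl) (h : y ∉ Pm l hl) :
    y ≠ 0 ∧ y⁻¹ ∈ Zloc l hl := by
  have h0 : y ≠ 0 := fun h0 => h (h0 ▸ Pm_zero hl)
  exact ⟨h0, inv_mem_zloc hl (not_Pm_num hl h) h0⟩

lemma inv_prime_mem (hl : l.Prime) (hm : m.Prime) (hlm : l ≠ m) :
    ((m:ℚ))⁻¹ ∈ Zloc l hl := by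
  refine ⟨1, (m:ℤ), ?_, ?_⟩
  · intro h
    have h' : l ∣ m := by exact_mod_cast h
    exact hlm ((Nat.prime_dvd_prime_iff_eq hl hm).mp h')
  · have : (m:ℚ) ≠ 0 := by exact_mod_cast hm.ne_zero
    field_simp
    simp

lemma int_Pm (hl : l.Prime) {t : ℤ} (h : (t:ℚ) ∈ Pm l hl) : (l:ℤ) ∣ t := by
  obtain ⟨z, ⟨n, d, hd, hzd⟩, hz⟩ := h
  have : (t : ℚ) * d = (l:ℚ) * n := by rw [hz]; linear_combination ((l:ℚ)) * hzd
  have h2 : t * d = (l:ℤ) * n := by exact_mod_cast this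
  have : (l:ℤ) ∣ t * d := ⟨n, h2⟩
  rcases (Nat.prime_iff_prime_int.mp hl).dvd_mul.mp this with h | h
  · exact h
  · exact absurd h hd

end RatLemmas
section Infra

variable {p q : ℕ} {hp : p.Prime} {hq : q.Prime}

lemma exists_t (hp : p.Prime) (hq : q.Prime) (hpq : p ≠ q) {c : ℚ} (hc : c ∈ Zloc p hp) :
    ∃ t : ℤ, ¬ (q:ℤ) ∣ t ∧ (1 - (t:ℚ) * c) ∉ Pm p hp := by
  by_cases h1 : (1 - c) ∈ Pm p hp
  · refine ⟨1 + q, ?_, ?_⟩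
    · intro h
      have h2 : (q:ℤ) ∣ 1 := by simpa using h.sub (dvd_refl (q:ℤ))
      exact (Nat.prime_iff_prime_int.mp hq).not_dvd_one h2
    · intro h2
      have hqc : (q:ℚ) * c ∈ Pm p hp := by
        have h3 := Pm_add hp h1 (Pm_neg hp h2)
        convert h3 using 1
        push_cast
        ring
      have hcP : c ∈ Pm p hp := by
        have h4 := Pm_mul hp hqc (inv_prime_mem hp hq hpq)
        have hq0 : (q:ℚ) ≠ 0 := by exact_mod_cast hq.ne_zero
        convert h4 using 1
        field_simp
      have h5 := Pm_add hp h1 hcP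
      exact one_not_Pm hp (by convert h5 using 1; ring)
  · exact ⟨1, (Nat.prime_iff_prime_int.mp hq).not_dvd_one, by simpa using h1⟩

/-- Build an element of `TriRing` from entries. -/
def el (p q : ℕ) (hp : p.Prime) (hq : q.Prime) (a x b : ℚ)
    (ha : a ∈ Zloc p hp) (hb : b ∈ Zloc q hq) : TriRing p q hp hq :=
  ⟨!![a, x; 0, b], by
    refine ⟨?_, ?_, ?_⟩ <;> simp [ha, hb]⟩

@[simp] lemma el_coe (a x b : ℚ) (ha : a ∈ Zloc p hp) (hb : b ∈ Zloc q hq) :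
    ((el p q hp hq a x b ha hb : TriRing p q hp hq) : Matrix (Fin 2) (Fin 2) ℚ)
      = !![a, x; 0, b] := rfl

@[simp] lemma el00 (a x b : ℚ) (ha : a ∈ Zloc p hp) (hb : b ∈ Zloc q hq) :
    ((el p q hp hq a x b ha hb : TriRing p q hp hq) : Matrix (Fin 2) (Fin 2) ℚ) 0 0 = a := by
  simp

@[simp] lemma el01 (a x b : ℚ) (ha : a ∈ Zloc p hp) (hb : b ∈ Zloc q hq) :
    ((el p q hp hq a x b ha hb : TriRing p q hp hq) : Matrix (Fin 2) (Fin 2) ℚ) 0 1 = x := by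
  simp

@[simp] lemma el11 (a x b : ℚ) (ha : a ∈ Zloc p hp) (hb : b ∈ Zloc q hq) :
    ((el p q hp hq a x b ha hb : TriRing p q hp hq) : Matrix (Fin 2) (Fin 2) ℚ) 1 1 = b := by
  simp

-- entries of ring operations
lemma mul00 (r s : TriRing p q hp hq) :
    ((r * s : TriRing p q hp hq) : Matrix (Fin 2) (Fin 2) ℚ) 0 0
      = (r : Matrix (Fin 2) (Fin 2) ℚ) 0 0 * (s : Matrix (Fin 2) (Fin 2) ℚ) 0 0 := by
  have : ((r * s : TriRing p q hp hq) : Matrix (Fin 2) (Fin 2) ℚ) 0 0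
      = (r : Matrix (Fin 2) (Fin 2) ℚ) 0 0 * (s : Matrix (Fin 2) (Fin 2) ℚ) 0 0
        + (r : Matrix (Fin 2) (Fin 2) ℚ) 0 1 * (s : Matrix (Fin 2) (Fin 2) ℚ) 1 0 := by
    simp [Matrix.mul_apply, Fin.sum_univ_two]
  rw [this, s.2.1, mul_zero, add_zero]

lemma mul01 (r s : TriRing p q hp hq) :
    ((r * s : TriRing p q hp hq) : Matrix (Fin 2) (Fin 2) ℚ) 0 1
      = (r : Matrix (Fin 2) (Fin 2) ℚ) 0 0 * (s : Matrix (Fin 2) (Fin 2) ℚ) 0 1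
        + (r : Matrix (Fin 2) (Fin 2) ℚ) 0 1 * (s : Matrix (Fin 2) (Fin 2) ℚ) 1 1 := by
  simp [Matrix.mul_apply, Fin.sum_univ_two]

lemma mul11 (r s : TriRing p q hp hq) :
    ((r * s : TriRing p q hp hq) : Matrix (Fin 2) (Fin 2) ℚ) 1 1
      = (r : Matrix (Fin 2) (Fin 2) ℚ) 1 1 * (s : Matrix (Fin 2) (Fin 2) ℚ) 1 1 := by
  have : ((r * s : TriRing p q hp hq) : Matrix (Fin 2) (Fin 2) ℚ) 1 1
      = (r : Matrix (Fin 2) (Fin 2) ℚ) 1 0 * (s : Matrix (Fin 2) (Fin 2) ℚ) 0 1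
        + (r : Matrix (Fin 2) (Fin 2) ℚ) 1 1 * (s : Matrix (Fin 2) (Fin 2) ℚ) 1 1 := by
    simp [Matrix.mul_apply, Fin.sum_univ_two]
  rw [this, r.2.1, zero_mul, zero_add]

-- membership facts for entries
lemma mem00 (r : TriRing p q hp hq) : (r : Matrix (Fin 2) (Fin 2) ℚ) 0 0 ∈ Zloc p hp := r.2.2.1
lemma mem11 (r : TriRing p q hp hq) : (r : Matrix (Fin 2) (Fin 2) ℚ) 1 1 ∈ Zloc q hq := r.2.2.2

/-- The quotient map `R → U`. -/
def mkU (p q : ℕ) (hp : p.Prime) (hq : q.Prime) : TriRing p q hp hq → Umod p q hp hq :=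
  Submodule.Quotient.mk

lemma mkU_surjective (u : Umod p q hp hq) : ∃ r, mkU p q hp hq r = u :=
  Submodule.Quotient.mk_surjective _ u

lemma mkU_add (r s : TriRing p q hp hq) :
    mkU p q hp hq (r + s) = mkU p q hp hq r + mkU p q hp hq s := rfl

lemma mkU_zero : mkU p q hp hq 0 = 0 := rfl

lemma mkU_smul (r s : TriRing p q hp hq) :
    (MulOpposite.op s) • (mkU p q hp hq r) = mkU p q hp hq (r * s) := rfl

lemma mkU_eq_mkU {r s : TriRing p q hp hq} :
    mkU p q hp hq r = mkU p q hp hq s ↔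
      (r : Matrix (Fin 2) (Fin 2) ℚ) 0 0 = (s : Matrix (Fin 2) (Fin 2) ℚ) 0 0 ∧
      (r : Matrix (Fin 2) (Fin 2) ℚ) 0 1 - (s : Matrix (Fin 2) (Fin 2) ℚ) 0 1 ∈ Zloc q hq := by
  rw [show mkU p q hp hq r = Submodule.Quotient.mk r from rfl,
    show mkU p q hp hq s = Submodule.Quotient.mk s from rfl, Submodule.Quotient.eq]
  constructor
  · rintro ⟨h0, h1, h2⟩
    constructor
    · have : (r : Matrix (Fin 2) (Fin 2) ℚ) 0 0 - (s : Matrix (Fin 2) (Fin 2) ℚ) 0 0 = 0 := h0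
      linarith [this]
    · exact h1
  · rintro ⟨h0, h1⟩
    refine ⟨by simpa using sub_eq_zero_of_eq h0, h1, (Zloc q hq).sub_mem r.2.2.2 s.2.2.2⟩

lemma mkU_eq_zero {r : TriRing p q hp hq} :
    mkU p q hp hq r = 0 ↔
      (r : Matrix (Fin 2) (Fin 2) ℚ) 0 0 = 0 ∧
      (r : Matrix (Fin 2) (Fin 2) ℚ) 0 1 ∈ Zloc q hq := by
  have h0 : (0 : Umod p q hp hq) = mkU p q hp hq 0 := rfl
  rw [h0, mkU_eq_mkU]
  simp

end Infra
section Rad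

variable {p q : ℕ} {hp : p.Prime} {hq : q.Prime}

lemma coe_add_entry (r s : TriRing p q hp hq) (i j : Fin 2) :
    ((r + s : TriRing p q hp hq) : Matrix (Fin 2) (Fin 2) ℚ) i j
      = (r : Matrix (Fin 2) (Fin 2) ℚ) i j + (s : Matrix (Fin 2) (Fin 2) ℚ) i j := rfl

lemma coe_sub_entry (r s : TriRing p q hp hq) (i j : Fin 2) :
    ((r - s : TriRing p q hp hq) : Matrix (Fin 2) (Fin 2) ℚ) i j
      = (r : Matrix (Fin 2) (Fin 2) ℚ) i j - (s : Matrix (Fin 2) (Fin 2) ℚ) i j := rfl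

lemma coe_neg_entry (r : TriRing p q hp hq) (i j : Fin 2) :
    ((-r : TriRing p q hp hq) : Matrix (Fin 2) (Fin 2) ℚ) i j
      = -((r : Matrix (Fin 2) (Fin 2) ℚ) i j) := rfl

/-- The radical of `U`: classes of matrices whose upper-left entry is in `p ℤ_(p)`. -/
def radU (p q : ℕ) (hp : p.Prime) (hq : q.Prime) :
    Submodule (TriRing p q hp hq)ᵐᵒᵖ (Umod p q hp hq) where
  carrier := {u | ∃ r : TriRing p q hp hq,
    u = mkU p q hp hq r ∧ (r : Matrix (Fin 2) (Fin 2) ℚ) 0 0 ∈ Pm p hp}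
  zero_mem' := ⟨0, rfl, by
    have : ((0 : TriRing p q hp hq) : Matrix (Fin 2) (Fin 2) ℚ) 0 0 = 0 := rfl
    rw [this]; exact Pm_zero hp⟩
  add_mem' := by
    rintro u v ⟨r, rfl, hr⟩ ⟨s, rfl, hs⟩
    exact ⟨r + s, rfl, by rw [coe_add_entry]; exact Pm_add hp hr hs⟩
  smul_mem' := by
    rintro m u ⟨r, rfl, hr⟩
    refine ⟨r * m.unop, rfl, ?_⟩
    rw [mul00]; exact Pm_mul hp hr (mem00 _)

/-- The radical of `M = U × U`. -/
def RadM (p q : ℕ) (hp : p.Prime) (hq : q.Prime) :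
    Submodule (TriRing p q hp hq)ᵐᵒᵖ (Umod p q hp hq × Umod p q hp hq) :=
  (radU p q hp hq).prod (radU p q hp hq)

lemma not_mem_radU {r : TriRing p q hp hq}
    (h : (r : Matrix (Fin 2) (Fin 2) ℚ) 0 0 ∉ Pm p hp) :
    mkU p q hp hq r ∉ radU p q hp hq := by
  rintro ⟨s, hs, hsP⟩
  rw [mkU_eq_mkU] at hs
  exact h (hs.1 ▸ hsP)

end Rad
section Small

variable {p q : ℕ} {hp : p.Prime} {hq : q.Prime}

lemma mkU_sub (r s : TriRing p q hp hq) :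
    mkU p q hp hq (r - s) = mkU p q hp hq r - mkU p q hp hq s := rfl

lemma mkU_neg (r : TriRing p q hp hq) :
    mkU p q hp hq (-r) = -(mkU p q hp hq r) := rfl

/-- If a submodule of `M = U × U` contains a pair of elements whose matrix of
`(0,0)`-entries of representatives has determinant a unit of `ℤ_(p)`, then it is all of `M`. -/
lemma pair_span (W : Submodule (TriRing p q hp hq)ᵐᵒᵖ (Umod p q hp hq × Umod p q hp hq))
    (w₁ w₂ : Umod p q hp hq × Umod p q hp hq) (hw₁ : w₁ ∈ W) (hw₂ : w₂ ∈ W)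
    (W11 W12 W21 W22 : TriRing p q hp hq)
    (h₁ : w₁ = (mkU p q hp hq W11, mkU p q hp hq W12))
    (h₂ : w₂ = (mkU p q hp hq W21, mkU p q hp hq W22))
    (hdet : ((W11 : Matrix (Fin 2) (Fin 2) ℚ) 0 0 * (W22 : Matrix (Fin 2) (Fin 2) ℚ) 0 0
      - (W12 : Matrix (Fin 2) (Fin 2) ℚ) 0 0 * (W21 : Matrix (Fin 2) (Fin 2) ℚ) 0 0)
        ∉ Pm p hp) : W = ⊤ := by
  set a1 := (W11 : Matrix (Fin 2) (Fin 2) ℚ) 0 0 with ha1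
  set c1 := (W12 : Matrix (Fin 2) (Fin 2) ℚ) 0 0 with hc1
  set c2 := (W21 : Matrix (Fin 2) (Fin 2) ℚ) 0 0 with hc2
  set a2 := (W22 : Matrix (Fin 2) (Fin 2) ℚ) 0 0 with ha2
  set Δ := a1 * a2 - c1 * c2 with hΔ
  have hΔmem : Δ ∈ Zloc p hp :=
    (Zloc p hp).sub_mem ((Zloc p hp).mul_mem (mem00 _) (mem00 _))
      ((Zloc p hp).mul_mem (mem00 _) (mem00 _))
  obtain ⟨hΔ0, hΔinv⟩ := zloc_unit hp hΔmem hdet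
  rw [Submodule.eq_top_iff']
  intro m
  obtain ⟨A, hA⟩ := mkU_surjective m.1
  obtain ⟨B, hB⟩ := mkU_surjective m.2
  set A0 := (A : Matrix (Fin 2) (Fin 2) ℚ) 0 0 with hA0d
  set B0 := (B : Matrix (Fin 2) (Fin 2) ℚ) 0 0 with hB0d
  set A1 := (A : Matrix (Fin 2) (Fin 2) ℚ) 0 1 with hA1d
  set B1 := (B : Matrix (Fin 2) (Fin 2) ℚ) 0 1 with hB1d
  have hA0m : A0 ∈ Zloc p hp := mem00 _
  have hB0m : B0 ∈ Zloc p hp := mem00 _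
  have hr₀ : Δ⁻¹ * (a2 * A0 - c2 * B0) ∈ Zloc p hp :=
    (Zloc p hp).mul_mem hΔinv ((Zloc p hp).sub_mem ((Zloc p hp).mul_mem (mem00 _) hA0m)
      ((Zloc p hp).mul_mem (mem00 _) hB0m))
  have hs₀ : Δ⁻¹ * (a1 * B0 - c1 * A0) ∈ Zloc p hp :=
    (Zloc p hp).mul_mem hΔinv ((Zloc p hp).sub_mem ((Zloc p hp).mul_mem (mem00 _) hB0m)
      ((Zloc p hp).mul_mem (mem00 _) hA0m))
  set r := el p q hp hq (Δ⁻¹ * (a2 * A0 - c2 * B0)) (Δ⁻¹ * (a2 * A1 - c2 * B1)) 0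
    hr₀ (Zloc q hq).zero_mem with hrdef
  set s := el p q hp hq (Δ⁻¹ * (a1 * B0 - c1 * A0)) (Δ⁻¹ * (a1 * B1 - c1 * A1)) 0
    hs₀ (Zloc q hq).zero_mem with hsdef
  have key : MulOpposite.op r • w₁ + MulOpposite.op s • w₂ = m := by
    rw [h₁, h₂]
    have hsm1 : MulOpposite.op r • ((mkU p q hp hq W11, mkU p q hp hq W12)) =
        (mkU p q hp hq (W11 * r), mkU p q hp hq (W12 * r)) := rfl
    have hsm2 : MulOpposite.op s • ((mkU p q hp hq W21, mkU p q hp hq W22)) =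
        (mkU p q hp hq (W21 * s), mkU p q hp hq (W22 * s)) := rfl
    rw [hsm1, hsm2]
    have : (m : Umod p q hp hq × Umod p q hp hq) = (mkU p q hp hq A, mkU p q hp hq B) := by
      rw [hA, hB]
    rw [this]
    have hcomp1 : mkU p q hp hq (W11 * r) + mkU p q hp hq (W21 * s) = mkU p q hp hq A := by
      rw [← mkU_add, mkU_eq_mkU]
      constructor
      · rw [coe_add_entry, mul00, mul00, el00, el00]
        field_simp
        ring
      · rw [coe_add_entry, mul01, mul01, el01, el01, el11, el11]
        have : a1 * (Δ⁻¹ * (a2 * A1 - c2 * B1)) + (W11 : Matrix (Fin 2) (Fin 2) ℚ) 0 1 * 0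
            + (c2 * (Δ⁻¹ * (a1 * B1 - c1 * A1)) + (W21 : Matrix (Fin 2) (Fin 2) ℚ) 0 1 * 0)
            - A1 = 0 := by
          field_simp
          ring
        rw [this]
        exact (Zloc q hq).zero_mem
    have hcomp2 : mkU p q hp hq (W12 * r) + mkU p q hp hq (W22 * s) = mkU p q hp hq B := by
      rw [← mkU_add, mkU_eq_mkU]
      constructor
      · rw [coe_add_entry, mul00, mul00, el00, el00]
        field_simp
        ring
      · rw [coe_add_entry, mul01, mul01, el01, el01, el11, el11]
        have : c1 * (Δ⁻¹ * (a2 * A1 - c2 * B1)) + (W12 : Matrix (Fin 2) (Fin 2) ℚ) 0 1 * 0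
            + (a2 * (Δ⁻¹ * (a1 * B1 - c1 * A1)) + (W22 : Matrix (Fin 2) (Fin 2) ℚ) 0 1 * 0)
            - B1 = 0 := by
          field_simp
          ring
        rw [this]
        exact (Zloc q hq).zero_mem
    exact Prod.ext hcomp1 hcomp2
  rw [← key]
  exact W.add_mem (W.smul_mem _ hw₁) (W.smul_mem _ hw₂)

end Small
section Small2

variable {p q : ℕ} {hp : p.Prime} {hq : q.Prime}

/-- `Rad M` is small in `M`. -/
lemma rad_small (W : Submodule (TriRing p q hp hq)ᵐᵒᵖ (Umod p q hp hq × Umod p q hp hq))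
    (h : RadM p q hp hq ⊔ W = ⊤) : W = ⊤ := by
  have h1p : (1:ℚ) ∈ Zloc p hp := (Zloc p hp).one_mem
  have h0q : (0:ℚ) ∈ Zloc q hq := (Zloc q hq).zero_mem
  set e := el p q hp hq 1 0 0 h1p h0q with he
  have hε₁ : ((mkU p q hp hq e, 0) : Umod p q hp hq × Umod p q hp hq) ∈ RadM p q hp hq ⊔ W := by
    rw [h]; trivial
  have hε₂ : (((0 : Umod p q hp hq), mkU p q hp hq e) : Umod p q hp hq × Umod p q hp hq)
      ∈ RadM p q hp hq ⊔ W := by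
    rw [h]; trivial
  obtain ⟨ρ, hρ, w₁, hw₁, hsum₁⟩ := Submodule.mem_sup.mp hε₁
  obtain ⟨ρ', hρ', w₂, hw₂, hsum₂⟩ := Submodule.mem_sup.mp hε₂
  obtain ⟨C₁, hC₁, hC₁P⟩ := (Submodule.mem_prod.mp hρ).1
  obtain ⟨D₁, hD₁, hD₁P⟩ := (Submodule.mem_prod.mp hρ).2
  obtain ⟨C₂, hC₂, hC₂P⟩ := (Submodule.mem_prod.mp hρ').1
  obtain ⟨D₂, hD₂, hD₂P⟩ := (Submodule.mem_prod.mp hρ').2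
  have hw₁eq : w₁ = (mkU p q hp hq (e - C₁), mkU p q hp hq (-D₁)) := by
    have : w₁ = ((mkU p q hp hq e, 0) : Umod p q hp hq × Umod p q hp hq) - ρ := by
      rw [← hsum₁]; abel
    rw [this]
    apply Prod.ext
    · show (mkU p q hp hq e) - ρ.1 = _
      rw [hC₁, mkU_sub]
    · show (0 : Umod p q hp hq) - ρ.2 = _
      rw [hD₁, mkU_neg, zero_sub]
  have hw₂eq : w₂ = (mkU p q hp hq (-C₂), mkU p q hp hq (e - D₂)) := by
    have : w₂ = (((0:Umod p q hp hq), mkU p q hp hq e) : Umod p q hp hq × Umod p q hp hq) - ρ' := by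
      rw [← hsum₂]; abel
    rw [this]
    apply Prod.ext
    · show (0 : Umod p q hp hq) - ρ'.1 = _
      rw [hC₂, mkU_neg, zero_sub]
    · show (mkU p q hp hq e) - ρ'.2 = _
      rw [hD₂, mkU_sub]
  apply pair_span W w₁ w₂ hw₁ hw₂ _ _ _ _ hw₁eq hw₂eq
  -- determinant not in Pm
  set u₁ := (C₁ : Matrix (Fin 2) (Fin 2) ℚ) 0 0 with hu₁
  set u₂ := (D₁ : Matrix (Fin 2) (Fin 2) ℚ) 0 0 with hu₂
  set u₃ := (C₂ : Matrix (Fin 2) (Fin 2) ℚ) 0 0 with hu₃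
  set u₄ := (D₂ : Matrix (Fin 2) (Fin 2) ℚ) 0 0 with hu₄
  have hent : ((e - C₁ : TriRing p q hp hq) : Matrix (Fin 2) (Fin 2) ℚ) 0 0
      * ((e - D₂ : TriRing p q hp hq) : Matrix (Fin 2) (Fin 2) ℚ) 0 0
      - ((-D₁ : TriRing p q hp hq) : Matrix (Fin 2) (Fin 2) ℚ) 0 0
      * ((-C₂ : TriRing p q hp hq) : Matrix (Fin 2) (Fin 2) ℚ) 0 0
      = (1 - u₁) * (1 - u₄) - u₂ * u₃ := by
    rw [coe_sub_entry, coe_sub_entry, coe_neg_entry, coe_neg_entry, el00]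
    ring
  rw [hent]
  intro hmem
  have hπ : u₁ + u₄ + -(u₁ * u₄) + u₂ * u₃ ∈ Pm p hp := by
    refine Pm_add hp (Pm_add hp (Pm_add hp hC₁P hD₂P) ?_) ?_
    · exact Pm_neg hp (Pm_mul hp hC₁P (Pm_subset hp hD₂P))
    · exact Pm_mul hp hD₁P (Pm_subset hp hC₂P)
  have : (1:ℚ) ∈ Pm p hp := by
    have h5 := Pm_add hp hmem hπ
    convert h5 using 1
    ring
  exact one_not_Pm hp this

/-- Reduction: if `X ≤ N ≤ X ⊔ Rad`, then `N/X` is small in `M/X`. -/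
lemma small_of_le (N X : Submodule (TriRing p q hp hq)ᵐᵒᵖ (Umod p q hp hq × Umod p q hp hq))
    (hXN : X ≤ N) (hle : N ≤ X ⊔ RadM p q hp hq) :
    IsSmallSubmodule (N.map X.mkQ) := by
  intro X' hX' htop
  apply hX'
  set W := X'.comap X.mkQ with hW
  have hXW : X ≤ W := by
    intro x hx
    have : X.mkQ x = 0 := by
      rw [Submodule.mkQ_apply, Submodule.Quotient.mk_eq_zero]
      exact hx
    simp only [hW, Submodule.mem_comap, this]
    exact X'.zero_mem
  have hmapW : W.map X.mkQ = X' :=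
    Submodule.map_comap_eq_of_surjective (Submodule.mkQ_surjective X) X'
  have hNW : (N ⊔ W).map X.mkQ = ⊤ := by
    rw [Submodule.map_sup, hmapW, htop]
  have h2 : N ⊔ W ⊔ X = ⊤ := by
    have h3 := congrArg (Submodule.comap X.mkQ) hNW
    rw [Submodule.comap_map_eq, Submodule.ker_mkQ] at h3
    rw [h3]
    exact Submodule.comap_top _
  have h4 : N ⊔ W = ⊤ := by
    rw [← h2, sup_assoc]
    congr 1
    exact (sup_eq_left.mpr hXW).symm
  have h5 : RadM p q hp hq ⊔ W = ⊤ := by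
    rw [eq_top_iff, ← h4]
    apply sup_le
    · intro n hn
      rcases Submodule.mem_sup.mp (hle hn) with ⟨x, hx, ρ, hρ, hxρ⟩
      exact Submodule.mem_sup.mpr ⟨ρ, hρ, x, hXW hx, by rw [← hxρ]; abel⟩
    · exact le_sup_right
  have h6 : W = ⊤ := rad_small W h5
  rw [← hmapW, h6, Submodule.map_top, Submodule.range_mkQ]

end Small2
section ChooseD

variable {p q : ℕ}

lemma choose_d (hp : p.Prime) (hq : q.Prime) (hpq : p ≠ q) {c : ℚ} (hc : c ∈ Zloc p hp) :
    ∃ d : ℚ, d ∈ Zloc p hp ∧ (1 - d * c) ∉ Pm p hp ∧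
      ∀ s₁ s₂ x' : ℚ, s₁ ∈ Zloc q hq → s₂ ∈ Zloc q hq →
        x' * (1 - d * c) = s₁ - d * s₂ → x' ∈ Zloc q hq ∧ c * x' ∈ Zloc q hq := by
  by_cases hcq : c = 0 ∨ c ∈ Pm q hq
  · obtain ⟨t, hqt, htc⟩ := exists_t hp hq hpq hc
    have hczq : c ∈ Zloc q hq := by
      rcases hcq with h | h
      · rw [h]; exact (Zloc q hq).zero_mem
      · exact Pm_subset hq h
    refine ⟨(t:ℚ), zloc_intCast hp t, htc, ?_⟩
    intro s₁ s₂ x' hs₁ hs₂ heq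
    have h1tc : (1 - (t:ℚ)*c) ∉ Pm q hq := by
      intro hP
      rcases hcq with h | h
      · rw [h] at hP; simp at hP; exact one_not_Pm hq hP
      · have hct : c * t ∈ Pm q hq := Pm_mul hq h (zloc_intCast hq t)
        have h5 := Pm_add hq hP hct
        exact one_not_Pm hq (by convert h5 using 1; ring)
    have hmem : (1 - (t:ℚ)*c) ∈ Zloc q hq :=
      (Zloc q hq).sub_mem (Zloc q hq).one_mem ((Zloc q hq).mul_mem (zloc_intCast hq t) hczq)
    obtain ⟨hne, hinv⟩ := zloc_unit hq hmem h1tc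
    have hx' : x' = (s₁ - (t:ℚ)*s₂) * (1 - (t:ℚ)*c)⁻¹ := by
      field_simp
      linear_combination heq
    have hx'm : x' ∈ Zloc q hq := by
      rw [hx']
      exact (Zloc q hq).mul_mem
        ((Zloc q hq).sub_mem hs₁ ((Zloc q hq).mul_mem (zloc_intCast hq t) hs₂)) hinv
    exact ⟨hx'm, (Zloc q hq).mul_mem hczq hx'm⟩
  · push_neg at hcq
    obtain ⟨hc0, hcPm⟩ := hcq
    have hq0 : (q:ℚ) ≠ 0 := by exact_mod_cast hq.ne_zero
    have hcnum : ¬ (q:ℤ) ∣ c.num := not_Pm_num hq hcPm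
    have hcinv : c⁻¹ ∈ Zloc q hq := inv_mem_zloc hq hcnum hc0
    obtain ⟨t, hqt, htc⟩ := exists_t hp hq hpq ((Zloc p hp).mul_mem hc (inv_prime_mem hp hq hpq))
    refine ⟨(t:ℚ) * (q:ℚ)⁻¹, (Zloc p hp).mul_mem (zloc_intCast hp t) (inv_prime_mem hp hq hpq),
      ?_, ?_⟩
    · intro h
      apply htc
      convert h using 2
      ring
    · intro s₁ s₂ x' hs₁ hs₂ heq
      set w₀ := (q:ℚ) * c⁻¹ - t with hw₀def
      have hw₀mem : w₀ ∈ Zloc q hq :=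
        (Zloc q hq).sub_mem ((Zloc q hq).mul_mem (zloc_natCast hq q) hcinv) (zloc_intCast hq t)
      have hw₀Pm : w₀ ∉ Pm q hq := by
        intro hP
        have hqc : (q:ℚ) * c⁻¹ ∈ Pm q hq := ⟨c⁻¹, hcinv, rfl⟩
        have ht : (t:ℚ) ∈ Pm q hq := by
          have h5 := Pm_add hq hqc (Pm_neg hq hP)
          convert h5 using 1
          rw [hw₀def]; ring
        exact hqt (int_Pm hq ht)
      obtain ⟨hw₀0, hw₀inv⟩ := zloc_unit hq hw₀mem hw₀Pm
      have hqd : (q:ℚ) * ((t:ℚ) * (q:ℚ)⁻¹) = (t:ℚ) := by field_simp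
      have hcw : c * w₀ = (q:ℚ) - (t:ℚ)*c := by
        rw [hw₀def]
        field_simp
      have heq2 : x' * (c * w₀) = (q:ℚ)*s₁ - (t:ℚ)*s₂ := by
        rw [hcw]
        linear_combination (q:ℚ) * heq + (c*x' - s₂) * hqd
      have hScw : c * w₀ ≠ 0 := mul_ne_zero hc0 hw₀0
      have hx' : x' = ((q:ℚ)*s₁ - (t:ℚ)*s₂) * w₀⁻¹ * c⁻¹ := by
        field_simp
        linear_combination heq2
      have hSmem : (q:ℚ)*s₁ - (t:ℚ)*s₂ ∈ Zloc q hq :=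
        (Zloc q hq).sub_mem ((Zloc q hq).mul_mem (zloc_natCast hq q) hs₁)
          ((Zloc q hq).mul_mem (zloc_intCast hq t) hs₂)
      have hx'm : x' ∈ Zloc q hq := by
        rw [hx']
        exact (Zloc q hq).mul_mem ((Zloc q hq).mul_mem hSmem hw₀inv) hcinv
      have hcx' : c * x' = ((q:ℚ)*s₁ - (t:ℚ)*s₂) * w₀⁻¹ := by
        rw [hx']
        field_simp
      refine ⟨hx'm, by rw [hcx']; exact (Zloc q hq).mul_mem hSmem hw₀inv⟩

end ChooseD
section MainCase

variable {p q : ℕ}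

lemma main_case (hp : p.Prime) (hq : q.Prime) (hpq : p ≠ q)
    (N : Submodule (TriRing p q hp hq)ᵐᵒᵖ (Umod p q hp hq × Umod p q hp hq))
    (A B : TriRing p q hp hq)
    (hw : ((mkU p q hp hq A, mkU p q hp hq B)) ∈ N)
    (ha : (A : Matrix (Fin 2) (Fin 2) ℚ) 0 0 ∉ Pm p hp)
    (h1 : N ⊔ RadM p q hp hq ≠ ⊤) :
    ∃ X, X ≤ N ∧ IsDirectSummand X ∧ N ≤ X ⊔ RadM p q hp hq := by
  set a := (A : Matrix (Fin 2) (Fin 2) ℚ) 0 0 with hadef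
  obtain ⟨ha0, hainv⟩ := zloc_unit hp (mem00 A) ha
  set c := (B : Matrix (Fin 2) (Fin 2) ℚ) 0 0 * a⁻¹ with hcdef
  have hcmem : c ∈ Zloc p hp := (Zloc p hp).mul_mem (mem00 B) hainv
  set e₁ := el p q hp hq a⁻¹ 0 0 hainv (Zloc q hq).zero_mem with he₁
  set v1 := el p q hp hq 1 0 0 (Zloc p hp).one_mem (Zloc q hq).zero_mem with hv1
  set vc := el p q hp hq c 0 0 hcmem (Zloc q hq).zero_mem with hvc
  have hv100 : (v1 : Matrix (Fin 2) (Fin 2) ℚ) 0 0 = 1 := by rw [hv1]; simp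
  have hv101 : (v1 : Matrix (Fin 2) (Fin 2) ℚ) 0 1 = 0 := by rw [hv1]; simp
  have hvc00 : (vc : Matrix (Fin 2) (Fin 2) ℚ) 0 0 = c := by rw [hvc]; simp
  have hvc01 : (vc : Matrix (Fin 2) (Fin 2) ℚ) 0 1 = 0 := by rw [hvc]; simp
  set v : Umod p q hp hq × Umod p q hp hq := (mkU p q hp hq v1, mkU p q hp hq vc) with hvdef
  have hvN : v ∈ N := by
    have h2 : v = MulOpposite.op e₁ • ((mkU p q hp hq A, mkU p q hp hq B)) := by
      have hsm : MulOpposite.op e₁ • ((mkU p q hp hq A, mkU p q hp hq B))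
          = (mkU p q hp hq (A * e₁), mkU p q hp hq (B * e₁)) := rfl
      rw [hsm, hvdef]
      apply Prod.ext
      · rw [mkU_eq_mkU]
        constructor
        · rw [mul00, el00, el00]
          exact (mul_inv_cancel₀ ha0).symm
        · rw [mul01, el01, el01, el11]
          simpa using (Zloc q hq).zero_mem
      · rw [mkU_eq_mkU]
        constructor
        · rw [mul00, el00, el00]
        · rw [mul01, el01, el01, el11]
          simpa using (Zloc q hq).zero_mem
    rw [h2]
    exact N.smul_mem _ hw
  obtain ⟨d, hd, hdc, hkey⟩ := choose_d hp hq hpq hcmem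
  have hdcne : (1 - d * c) ≠ 0 :=
    (zloc_unit hp ((Zloc p hp).sub_mem (Zloc p hp).one_mem ((Zloc p hp).mul_mem hd hcmem)) hdc).1
  set gd := el p q hp hq d 0 0 hd (Zloc q hq).zero_mem with hgd
  have hgd00 : (gd : Matrix (Fin 2) (Fin 2) ℚ) 0 0 = d := by rw [hgd]; simp
  have hgd01 : (gd : Matrix (Fin 2) (Fin 2) ℚ) 0 1 = 0 := by rw [hgd]; simp
  set g : Umod p q hp hq × Umod p q hp hq := (mkU p q hp hq gd, mkU p q hp hq v1) with hgdef
  set X := Submodule.span (TriRing p q hp hq)ᵐᵒᵖ {v} with hX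
  set Y := Submodule.span (TriRing p q hp hq)ᵐᵒᵖ {g} with hY
  have hvX : v ∈ X := Submodule.mem_span_singleton_self v
  have hgY : g ∈ Y := Submodule.mem_span_singleton_self g
  have hXN : X ≤ N := (Submodule.span_singleton_le_iff_mem v N).mpr hvN
  have hcodis : X ⊔ Y = ⊤ := by
    apply pair_span (X ⊔ Y) v g (Submodule.mem_sup_left hvX) (Submodule.mem_sup_right hgY)
      v1 vc gd v1 rfl rfl
    have hdet : (v1 : Matrix (Fin 2) (Fin 2) ℚ) 0 0 * (v1 : Matrix (Fin 2) (Fin 2) ℚ) 0 0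
        - (vc : Matrix (Fin 2) (Fin 2) ℚ) 0 0 * (gd : Matrix (Fin 2) (Fin 2) ℚ) 0 0
        = 1 - d * c := by
      rw [hv100, hvc00, hgd00]; ring
    rw [hdet]
    exact hdc
  have hdisj : Disjoint X Y := by
    rw [Submodule.disjoint_def]
    intro m hmX hmY
    obtain ⟨ro, hro⟩ := Submodule.mem_span_singleton.mp hmX
    obtain ⟨so, hso⟩ := Submodule.mem_span_singleton.mp hmY
    have hro' : (mkU p q hp hq (v1 * ro.unop), mkU p q hp hq (vc * ro.unop)) = m := by
      rw [← hro]; rfl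
    have hso' : (mkU p q hp hq (gd * so.unop), mkU p q hp hq (v1 * so.unop)) = m := by
      rw [← hso]; rfl
    set r := ro.unop with hr
    set s := so.unop with hs
    have hcomp1 : mkU p q hp hq (v1 * r) = mkU p q hp hq (gd * s) := by
      have := (congrArg Prod.fst hro').trans (congrArg Prod.fst hso').symm
      simpa using this
    have hcomp2 : mkU p q hp hq (vc * r) = mkU p q hp hq (v1 * s) := by
      have := (congrArg Prod.snd hro').trans (congrArg Prod.snd hso').symm
      simpa using this
    rw [mkU_eq_mkU] at hcomp1 hcomp2
    obtain ⟨h100, h101⟩ := hcomp1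
    obtain ⟨h200, h201⟩ := hcomp2
    rw [mul00, mul00, hv100, hgd00] at h100
    rw [mul00, mul00, hvc00, hv100] at h200
    rw [mul01, mul01, hv100, hv101, hgd00, hgd01] at h101
    rw [mul01, mul01, hvc00, hvc01, hv100, hv101] at h201
    -- (0,0) entries
    set r0 := (r : Matrix (Fin 2) (Fin 2) ℚ) 0 0 with hr0
    set s0 := (s : Matrix (Fin 2) (Fin 2) ℚ) 0 0 with hs0
    have hr00 : r0 = 0 := by
      have h3 : r0 * (1 - d * c) = 0 := by linear_combination h100 - d * h200
      rcases mul_eq_zero.mp h3 with h | h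
      · exact h
      · exact absurd h hdcne
    have hs00 : s0 = 0 := by
      have : c * r0 = 1 * s0 := h200
      rw [hr00] at this
      linarith [this]
    -- (0,1) entries
    set r1 := (r : Matrix (Fin 2) (Fin 2) ℚ) 0 1 with hr1
    set s1 := (s : Matrix (Fin 2) (Fin 2) ℚ) 0 1 with hs1
    have hs₁' : r1 - d * s1 ∈ Zloc q hq := by simpa using h101
    have hs₂' : c * r1 - s1 ∈ Zloc q hq := by simpa using h201
    obtain ⟨hr1q, hcr1q⟩ := hkey (r1 - d * s1) (c * r1 - s1) r1 hs₁' hs₂' (by ring)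
    rw [← hro']
    apply Prod.ext
    · show mkU p q hp hq (v1 * r) = 0
      rw [mkU_eq_zero]
      constructor
      · rw [mul00, hv100, ← hr0, hr00]; ring
      · rw [mul01, hv100, hv101, ← hr1]
        simpa using hr1q
    · show mkU p q hp hq (vc * r) = 0
      rw [mkU_eq_zero]
      constructor
      · rw [mul00, hvc00, ← hr0, hr00]; ring
      · rw [mul01, hvc00, hvc01, ← hr1]
        simpa using hcr1q
  refine ⟨X, hXN, ⟨Y, ⟨hdisj, codisjoint_iff.mpr hcodis⟩⟩, ?_⟩
  -- N ≤ X ⊔ Rad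
  intro n hn
  obtain ⟨A', hA'⟩ := mkU_surjective n.1
  obtain ⟨B', hB'⟩ := mkU_surjective n.2
  have hneq : n = (mkU p q hp hq A', mkU p q hp hq B') := by
    apply Prod.ext <;> simp [hA', hB']
  set A0' := (A' : Matrix (Fin 2) (Fin 2) ℚ) 0 0 with hA0'
  set B0' := (B' : Matrix (Fin 2) (Fin 2) ℚ) 0 0 with hB0'
  set β := B0' - c * A0' with hβdef
  set r' := el p q hp hq A0' ((A' : Matrix (Fin 2) (Fin 2) ℚ) 0 1) 0 (mem00 A')
    (Zloc q hq).zero_mem with hr'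
  have hsmul : MulOpposite.op r' • v = (mkU p q hp hq (v1 * r'), mkU p q hp hq (vc * r')) := rfl
  by_cases hβ : β ∈ Pm p hp
  · have hxv : MulOpposite.op r' • v ∈ X := X.smul_mem _ hvX
    refine Submodule.mem_sup.mpr ⟨MulOpposite.op r' • v, hxv,
      n - MulOpposite.op r' • v, ?_, by abel⟩
    rw [hneq, hsmul]
    have hpair : ((mkU p q hp hq A', mkU p q hp hq B') : Umod p q hp hq × Umod p q hp hq)
        - (mkU p q hp hq (v1 * r'), mkU p q hp hq (vc * r'))
        = (mkU p q hp hq (A' - v1 * r'), mkU p q hp hq (B' - vc * r')) := by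
      rw [mkU_sub, mkU_sub]
      rfl
    rw [hpair]
    refine Submodule.mem_prod.mpr ⟨?_, ?_⟩
    · refine ⟨A' - v1 * r', rfl, ?_⟩
      have hr'00 : (r' : Matrix (Fin 2) (Fin 2) ℚ) 0 0 = A0' := by rw [hr']; simp
      have hz : ((A' - v1 * r' : TriRing p q hp hq) : Matrix (Fin 2) (Fin 2) ℚ) 0 0 = 0 := by
        rw [coe_sub_entry, mul00, hv100, hr'00, ← hA0']; ring
      rw [hz]
      exact Pm_zero hp
    · refine ⟨B' - vc * r', rfl, ?_⟩
      have hr'00 : (r' : Matrix (Fin 2) (Fin 2) ℚ) 0 0 = A0' := by rw [hr']; simp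
      have hz : ((B' - vc * r' : TriRing p q hp hq) : Matrix (Fin 2) (Fin 2) ℚ) 0 0 = β := by
        rw [coe_sub_entry, mul00, hvc00, hr'00, hβdef, hB0']
      rw [hz]
      exact hβ
  · exfalso
    apply h1
    have hr'vN : MulOpposite.op r' • v ∈ N := hXN (X.smul_mem _ hvX)
    have hn'N : n - MulOpposite.op r' • v ∈ N := N.sub_mem hn hr'vN
    have hn'eq : n - MulOpposite.op r' • v
        = (mkU p q hp hq (A' - v1 * r'), mkU p q hp hq (B' - vc * r')) := by
      rw [hneq, hsmul, mkU_sub, mkU_sub]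
      rfl
    apply pair_span (N ⊔ RadM p q hp hq) v (n - MulOpposite.op r' • v)
      (Submodule.mem_sup_left hvN) (Submodule.mem_sup_left hn'N)
      v1 vc (A' - v1 * r') (B' - vc * r') rfl hn'eq
    have hr'00 : (r' : Matrix (Fin 2) (Fin 2) ℚ) 0 0 = A0' := by rw [hr']; simp
    have hdet2 : (v1 : Matrix (Fin 2) (Fin 2) ℚ) 0 0
        * ((B' - vc * r' : TriRing p q hp hq) : Matrix (Fin 2) (Fin 2) ℚ) 0 0
        - (vc : Matrix (Fin 2) (Fin 2) ℚ) 0 0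
        * ((A' - v1 * r' : TriRing p q hp hq) : Matrix (Fin 2) (Fin 2) ℚ) 0 0 = β := by
      rw [coe_sub_entry, coe_sub_entry, mul00, mul00, hv100, hvc00, hr'00, hβdef, hA0', hB0']
      ring
    rw [hdet2]
    exact hβ

end MainCase
section Final

variable {p q : ℕ}

lemma radM_map_swap (hp : p.Prime) (hq : q.Prime) :
    (RadM p q hp hq).map (LinearEquiv.prodComm (TriRing p q hp hq)ᵐᵒᵖ
      (Umod p q hp hq) (Umod p q hp hq)).toLinearMap = RadM p q hp hq := by
  ext m
  constructor
  · rintro ⟨n, hn, rfl⟩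
    obtain ⟨h1, h2⟩ := Submodule.mem_prod.mp hn
    exact Submodule.mem_prod.mpr ⟨h2, h1⟩
  · intro hm
    obtain ⟨h1, h2⟩ := Submodule.mem_prod.mp hm
    exact ⟨(m.2, m.1), Submodule.mem_prod.mpr ⟨h2, h1⟩, rfl⟩

lemma map_swap_swap (hp : p.Prime) (hq : q.Prime)
    (S : Submodule (TriRing p q hp hq)ᵐᵒᵖ (Umod p q hp hq × Umod p q hp hq)) :
    (S.map (LinearEquiv.prodComm (TriRing p q hp hq)ᵐᵒᵖ (Umod p q hp hq) (Umod p q hp hq)).toLinearMap).map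
      (LinearEquiv.prodComm (TriRing p q hp hq)ᵐᵒᵖ (Umod p q hp hq) (Umod p q hp hq)).toLinearMap = S := by
  ext m
  constructor
  · rintro ⟨y, ⟨x, hx, rfl⟩, rfl⟩
    simpa using hx
  · intro hm
    exact ⟨(m.2, m.1), ⟨m, hm, rfl⟩, rfl⟩

theorem stmt_17' (p q : ℕ) (hp : p.Prime) (hq : q.Prime) (hpq : p ≠ q) :
    IsLiftingModule (TriRing p q hp hq)ᵐᵒᵖ (Umod p q hp hq × Umod p q hp hq) := by
  intro N
  by_cases h1 : N ⊔ RadM p q hp hq = ⊤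
  · have hN : N = ⊤ := by
      apply rad_small
      rw [sup_comm]
      exact h1
    refine ⟨⊤, le_of_eq hN.symm, ⟨⊥, isCompl_top_bot⟩, ?_⟩
    intro X' hX' _
    apply hX'
    have hsub : Subsingleton ((Umod p q hp hq × Umod p q hp hq) ⧸
        (⊤ : Submodule (TriRing p q hp hq)ᵐᵒᵖ (Umod p q hp hq × Umod p q hp hq))) :=
      Submodule.Quotient.subsingleton_iff.mpr rfl
    ext x
    have hx : x = 0 := Subsingleton.elim x 0
    rw [hx]
    simp
  by_cases h2 : N ≤ RadM p q hp hq
  · exact ⟨⊥, bot_le, ⟨⊤, isCompl_bot_top⟩,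
      small_of_le N ⊥ bot_le (h2.trans le_sup_right)⟩
  obtain ⟨w, hwN, hwR⟩ := SetLike.not_le_iff_exists.mp h2
  obtain ⟨A, hA⟩ := mkU_surjective w.1
  obtain ⟨B, hB⟩ := mkU_surjective w.2
  have hweq : w = (mkU p q hp hq A, mkU p q hp hq B) := by
    apply Prod.ext <;> simp [hA, hB]
  have hor : (A : Matrix (Fin 2) (Fin 2) ℚ) 0 0 ∉ Pm p hp ∨
      (B : Matrix (Fin 2) (Fin 2) ℚ) 0 0 ∉ Pm p hp := by
    by_contra hcon
    push_neg at hcon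
    apply hwR
    rw [hweq]
    exact Submodule.mem_prod.mpr ⟨⟨A, rfl, hcon.1⟩, ⟨B, rfl, hcon.2⟩⟩
  rcases hor with hA0 | hB0
  · obtain ⟨X, hXN, hXsum, hXle⟩ := main_case hp hq hpq N A B (hweq ▸ hwN) hA0 h1
    exact ⟨X, hXN, hXsum, small_of_le N X hXN hXle⟩
  · -- swap the two coordinates
    set σ := (LinearEquiv.prodComm (TriRing p q hp hq)ᵐᵒᵖ (Umod p q hp hq) (Umod p q hp hq)).toLinearMap
      with hσ
    set N' := N.map σ with hN'
    have hswapN : N'.map σ = N := map_swap_swap hp hq N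
    have hBA : ((mkU p q hp hq B, mkU p q hp hq A)) ∈ N' := by
      refine ⟨w, hwN, ?_⟩
      rw [hweq]
      rfl
    have h1' : N' ⊔ RadM p q hp hq ≠ ⊤ := by
      intro htop
      apply h1
      have := congrArg (Submodule.map σ) htop
      rw [Submodule.map_sup, hswapN, radM_map_swap hp hq] at this
      rw [this]
      ext x
      constructor
      · intro _; trivial
      · intro _
        exact ⟨(x.2, x.1), trivial, rfl⟩
    obtain ⟨X', hX'N', ⟨Y', hcompl'⟩, hX'le⟩ := main_case hp hq hpq N' B A hBA hB0 h1'
    refine ⟨X'.map σ, ?_, ⟨Y'.map σ, ?_, ?_⟩, ?_⟩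
    · rw [← hswapN]
      exact Submodule.map_mono hX'N'
    · -- disjoint
      rw [Submodule.disjoint_def]
      rintro m ⟨x, hx, rfl⟩ hmY
      obtain ⟨y, hy, hyx⟩ := hmY
      have hyx' : y = x := by
        have := congrArg σ hyx
        simpa [hσ] using this
      rw [hyx'] at hy
      have hx0 : x = 0 := (Submodule.disjoint_def.mp hcompl'.disjoint) x hx hy
      rw [hx0]
      simp
    · -- codisjoint
      rw [codisjoint_iff, ← Submodule.map_sup, codisjoint_iff.mp hcompl'.codisjoint]
      ext x
      constructor
      · intro _; trivial
      · intro _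
        exact ⟨(x.2, x.1), trivial, rfl⟩
    · -- smallness
      have hle : N ≤ X'.map σ ⊔ RadM p q hp hq := by
        rw [← hswapN, ← radM_map_swap hp hq, ← Submodule.map_sup]
        exact Submodule.map_mono hX'le
      have hXN : X'.map σ ≤ N := by
        rw [← hswapN]
        exact Submodule.map_mono hX'N'
      exact small_of_le N (X'.map σ) hXN hle

end Final
/-- For distinct primes `p`, `q`, the right `R`-module `U²` is lifting, where `U = R/L`,
`R = [[ℤ_(p), ℚ], [0, ℤ_(q)]]` and `L = [[0, ℤ_(q)], [0, ℤ_(q)]]`. -/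
theorem stmt_17 (p q : ℕ) (hp : p.Prime) (hq : q.Prime) (hpq : p ≠ q) :
    IsLiftingModule (TriRing p q hp hq)ᵐᵒᵖ (Umod p q hp hq × Umod p q hp hq) := by
  exact stmt_17' p q hp hq hpq
end
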